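/- Inserting a letter of strictly higher priority can break the block order: over the alphabet {0,1,2} with priorities 0 < 1 < 2 (each letter's priority equal to its value), the word 1·1 is not block-smaller than 1·2·1. -/

import Mathlib

/-- Glue together a decomposition into blocks and separator letters:
`glue [(u₀,x₀),…,(u_{n-1},x_{n-1})] u_n = u₀x₀u₁x₁⋯x_{n-1}u_n`. -/
def glue {α : Type*} (ps : List (List α × α)) (last : List α) : List α :=
  (ps.map (fun p => p.1 ++ [p.2])).flatten ++ last

/-- The `i`-th block of a decomposition (`last` for the final index). -/
def blockAt {α : Type*} (ps : List (List α × α)) (last : List α) (i : ℕ) :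
    List α :=
  if h : i < ps.length then (ps.get ⟨i, h⟩).1 else last

/-- The blockSegment `v_i y_i v_{i+1} ⋯ y_{j-1} v_j` of a decomposition. -/
def blockSegment {α : Type*} (ps : List (List α × α)) (last : List α) (i j : ℕ) :
    List α :=
  glue ((ps.take j).drop i) (blockAt ps last j)

/-- The block order at priority level `p`: at level `0` (a single priority) it
is the subword order; at level `p+1`, either both words consist solely of
letters of priority `p+1` and are related by the subword order, or both words
are split at their priority-`p+1` letters into sub-blocks of lower priority and
there is a strictly increasing witness block map `φ` sending the first block to
the first and the last block to the last, such that blocks embed recursively in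
the block order and each separator letter embeds as a subword into the
corresponding blockSegment of the larger word. -/
def BlockLE {α : Type*} (prio : α → ℕ) : ℕ → List α → List α → Prop
  | 0, u, v => u.Sublist v
  | (p+1), u, v =>
      ((∀ a ∈ u, prio a = p + 1) ∧ (∀ a ∈ v, prio a = p + 1) ∧ u.Sublist v) ∨
      ∃ (us : List (List α × α)) (ulast : List α)
        (vs : List (List α × α)) (vlast : List α) (φ : ℕ → ℕ),
        u = glue us ulast ∧ v = glue vs vlast ∧
        (∀ q ∈ us, prio q.2 = p + 1 ∧ ∀ a ∈ q.1, prio a ≤ p) ∧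
        (∀ a ∈ ulast, prio a ≤ p) ∧
        (∀ q ∈ vs, prio q.2 = p + 1 ∧ ∀ a ∈ q.1, prio a ≤ p) ∧
        (∀ a ∈ vlast, prio a ≤ p) ∧
        (∀ i j, i < j → j ≤ us.length → φ i < φ j) ∧
        φ 0 = 0 ∧ φ us.length = vs.length ∧
        (∀ i ≤ us.length,
          BlockLE prio p (blockAt us ulast i) (blockAt vs vlast (φ i))) ∧
        (∀ i (h : i < us.length),
          [(us.get ⟨i, h⟩).2].Sublist (blockSegment vs vlast (φ i) (φ (i + 1))))

/-- Inserting a letter of strictly higher priority can break the block order: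
over the alphabet `{0,1,2}` where each letter's priority equals its value, the
word `1·1` is not block-smaller than `1·2·1`. -/
lemma sep_mem_glue {α : Type*} (ps : List (List α × α)) (last : List α)
    (q : List α × α) (hq : q ∈ ps) : q.2 ∈ glue ps last := by
  unfold glue
  apply List.mem_append_left
  rw [List.mem_flatten]
  exact ⟨q.1 ++ [q.2], List.mem_map_of_mem hq, by simp⟩

theorem not_blockLE_insert_higher :
    ¬ BlockLE (fun a : Fin 3 => (a : ℕ)) 2 [1, 1] [1, 2, 1] := by
  intro h
  rcases h with ⟨h1, _⟩ | ⟨us, ulast, vs, vlast, φ, hu, hv, hus, _, hvs, hvlast, _, hφ0, hφlen, _, _⟩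
  · have := h1 1 (by simp)
    simp at this
  · -- us must be empty
    have hus0 : us = [] := by
      cases us with
      | nil => rfl
      | cons q rest =>
        exfalso
        have hmem := sep_mem_glue (q :: rest) ulast q (by simp)
        rw [← hu] at hmem
        have hp := (hus q (by simp)).1
        simp only [List.mem_cons, List.mem_singleton] at hmem
        rcases hmem with h | h | h
        · simp [h] at hp
        · simp [h] at hp
        · simp at h
    subst hus0
    have hvs0 : vs = [] := by
      have : φ 0 = vs.length := by simpa using hφlen
      rw [hφ0] at this
      exact List.length_eq_zero_iff.mp this.symm
    subst hvs0
    have : vlast = [1, 2, 1] := by simpa [glue] using hv.symm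
    subst this
    have := hvlast 2 (by simp)
    simp at this
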